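/- Let g : ℝ → ℝ be convex with bounded nonempty sublevel sets, let λ, μ ∈ [0,∞), and let b⁻ ≤ b⁺ satisfy −λ ∈ ∂g(b⁻) and μ ∈ ∂g(b⁺). Define h : ℝ → ℝ by h(y) = g(b⁻) + λ(b⁻ − y) for y < b⁻, h(y) = g(y) for b⁻ ≤ y ≤ b⁺, and h(y) = g(b⁺) + μ(y − b⁺) for y > b⁺. Then h is convex on ℝ. -/
import Mathlib


open Filter Topology Set

def subdiff (g : ℝ → ℝ) (x : ℝ) : Set ℝ :=
  {d : ℝ | ∀ z : ℝ, g x + d * (z - x) ≤ g z}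

private lemma neg_comp_convex {f : ℝ → ℝ} (hf : ConvexOn ℝ Set.univ f) :
    ConvexOn ℝ Set.univ (fun y => f (-y)) := by
  refine ⟨convex_univ, fun x _ y _ a b ha hb hab => ?_⟩
  have := hf.2 (mem_univ (-x)) (mem_univ (-y)) ha hb hab
  simp only [smul_eq_mul] at this ⊢
  convert this using 2
  ring

private lemma trunc_convex (f t : ℝ → ℝ) (hf : ConvexOn ℝ Set.univ f) (c s : ℝ)
    (hsupp : ∀ z, f c + s * (z - c) ≤ f z)
    (ht1 : ∀ y, y < c → t y = f c + s * (y - c))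
    (ht2 : ∀ y, c ≤ y → t y = f y) : ConvexOn ℝ Set.univ t := by
  refine convexOn_of_slope_mono_adjacent convex_univ ?_
  intro x y z _ _ hxy hyz
  have hyx : (0:ℝ) < y - x := by linarith
  have hzy : (0:ℝ) < z - y := by linarith
  rw [div_le_div_iff₀ hyx hzy]
  rcases lt_or_ge y c with hyc | hyc
  · -- y < c, so x < c
    have hxc : x < c := lt_trans hxy hyc
    rw [ht1 x hxc, ht1 y hyc]
    rcases lt_or_ge z c with hzc | hzc
    · rw [ht1 z hzc]; ring_nf; nlinarith
    · rw [ht2 z hzc]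
      have := hsupp z
      nlinarith
  · -- c ≤ y
    rw [ht2 y hyc, ht2 z (le_trans hyc (le_of_lt hyz))]
    rcases lt_or_ge x c with hxc | hxc
    · rw [ht1 x hxc]
      have K1 : (f y - f c) * (z - y) ≤ (f z - f y) * (y - c) := by
        rcases eq_or_lt_of_le hyc with hcy | hcy
        · rw [← hcy]; simp
        · have := hf.slope_mono_adjacent (mem_univ c) (mem_univ z) hcy hyz
          have hyc' : (0:ℝ) < y - c := by linarith
          rw [div_le_div_iff₀ hyc' hzy] at this
          linarith
      have K2 : s * (z - y) ≤ f z - f y := by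
        rcases eq_or_lt_of_le hyc with hcy | hcy
        · have := hsupp z; rw [← hcy]; nlinarith
        · have h1 : f c + s * (y - c) ≤ f y := hsupp y
          have h2 := hf.slope_mono_adjacent (mem_univ c) (mem_univ z) hcy hyz
          have hyc' : (0:ℝ) < y - c := by linarith
          rw [div_le_div_iff₀ hyc' hzy] at h2
          nlinarith
      nlinarith [mul_nonneg (le_of_lt (by linarith : (0:ℝ) < c - x)) (by linarith : (0:ℝ) ≤ f z - f y - s * (z - y))]
    · rw [ht2 x hxc]
      have := hf.slope_mono_adjacent (mem_univ x) (mem_univ z) hxy hyz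
      rw [div_le_div_iff₀ hyx hzy] at this
      linarith

theorem stmt_13 (g : ℝ → ℝ) (hg : ConvexOn ℝ Set.univ g)
    (hlev : ∃ α : ℝ, {x : ℝ | g x ≤ α}.Nonempty ∧ Bornology.IsBounded {x : ℝ | g x ≤ α})
    (lam mu : ℝ) (hlam : 0 ≤ lam) (hmu : 0 ≤ mu)
    (bm bp : ℝ) (hb : bm ≤ bp) (hbm : -lam ∈ subdiff g bm) (hbp : mu ∈ subdiff g bp)
    (h : ℝ → ℝ)
    (hh₁ : ∀ y : ℝ, y < bm → h y = g bm + lam * (bm - y))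
    (hh₂ : ∀ y : ℝ, bm ≤ y → y ≤ bp → h y = g y)
    (hh₃ : ∀ y : ℝ, bp < y → h y = g bp + mu * (y - bp)) :
    ConvexOn ℝ Set.univ h := by
  set h₁ : ℝ → ℝ := fun y => if y < bm then g bm + (-lam) * (y - bm) else g y with hh1def
  have hsupp1 : ∀ z, g bm + (-lam) * (z - bm) ≤ g z := fun z => hbm z
  have hconv1 : ConvexOn ℝ Set.univ h₁ := by
    refine trunc_convex g h₁ hg bm (-lam) hsupp1 ?_ ?_
    · intro y hy; simp [hh1def, hy]
    · intro y hy; simp [hh1def, not_lt.mpr hy]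
  have h1bp : h₁ bp = g bp := by simp [hh1def, not_lt.mpr hb]
  -- h₁ at negated points
  have h1val : ∀ w : ℝ, w ≤ bp → h w = h₁ w := by
    intro w hw
    rcases lt_or_ge w bm with hwm | hwm
    · rw [hh₁ w hwm]; simp [hh1def, hwm]; ring
    · rw [hh₂ w hwm hw]; simp [hh1def, not_lt.mpr hwm]
  have hconv2 : ConvexOn ℝ Set.univ (fun y => h (-y)) := by
    refine trunc_convex (fun y => h₁ (-y)) (fun y => h (-y)) (neg_comp_convex hconv1)
      (-bp) (-mu) ?_ ?_ ?_
    · intro z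
      show h₁ (-(-bp)) + (-mu) * (z - -bp) ≤ h₁ (-z)
      rw [neg_neg, h1bp]
      rcases le_or_gt bm (-z) with hz | hz
      · have h2 : g bp + mu * (-z - bp) ≤ g (-z) := hbp (-z)
        simp only [hh1def, not_lt.mpr hz, if_neg (not_lt.mpr hz)]
        nlinarith
      · have h3 : g bp + mu * (bm - bp) ≤ g bm := hbp bm
        simp only [hh1def, if_pos hz]
        nlinarith [mul_nonneg hmu (by linarith : (0:ℝ) ≤ bm + z)]
    · intro y hy
      have : bp < -y := by linarith
      show h (-y) = h₁ (-(-bp)) + -mu * (y - -bp)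
      rw [neg_neg, h1bp, hh₃ _ this]; ring
    · intro y hy
      have : -y ≤ bp := by linarith
      show h (-y) = h₁ (-y)
      exact h1val _ this
  have : h = fun y => (fun y => h (-y)) (-y) := by funext y; simp
  rw [this]
  exact neg_comp_convex hconv2
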